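/- Let p be an odd prime and k ≥ 2. Define h: 𝔽_p^k → 𝔽_p^k by h(x_1,…,x_k) = (x_1,…,x_{ℓ-1}, x_ℓ+1, x_{ℓ+1}+1, …, x_k+1) where ℓ is minimal with x_{ℓ+1} = ⋯ = x_k = 0 (and h adds 1 to all coordinates if all of x_2,…,x_k are 0). Then h is a permutation of 𝔽_p^k consisting of a single cycle of length p^k, and both h and x ↦ h(x)+x are bijections. -/

import Mathlib

lemma stmt18_carry {p k : ℕ} (hp : p.Prime) (a : ZMod p) (ha : a ≠ 0)
    (x : Fin k → ZMod p) (i : Fin k)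
    (hyi : ∀ j, i < j → a * x j + (if ∀ j', j < j' → x j' = 0 then 1 else 0) = 1) :
    ∀ j, i < j → x j = 0 := by
  haveI := Fact.mk hp
  by_contra h0
  push_neg at h0
  obtain ⟨j0, hj0, hxj0⟩ := h0
  classical
  set S : Finset (Fin k) := Finset.univ.filter (fun j => i < j ∧ x j ≠ 0) with hS
  have hSne : S.Nonempty := ⟨j0, by simp [hS, hj0, hxj0]⟩
  set j := S.max' hSne with hj
  have hjS : j ∈ S := S.max'_mem hSne
  simp only [hS, Finset.mem_filter] at hjS
  have hzero : ∀ j', j < j' → x j' = 0 := by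
    intro j' hj'
    by_contra hx'
    have : j' ∈ S := by simp [hS, hjS.2.1.trans hj', hx']
    exact absurd (Finset.le_max' S j' this) (not_le.mpr hj')
  have h1 := hyi j hjS.2.1
  rw [if_pos hzero] at h1
  have h2 : a * x j = 0 := by linear_combination h1
  rcases mul_eq_zero.mp h2 with h | h
  · exact ha h
  · exact hjS.2.2 h

lemma stmt18_inj {p k : ℕ} (hp : p.Prime) (a : ZMod p) (ha : a ≠ 0) :
    Function.Injective (fun x : Fin k → ZMod p =>
      fun i => a * x i + (if ∀ j, i < j → x j = 0 then 1 else 0)) := by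
  haveI := Fact.mk hp
  intro x x' hxx'
  simp only [funext_iff] at hxx'
  have key : ∀ i : Fin k, (∀ j, i < j → x j = 0) ↔ (∀ j, i < j → x' j = 0) := by
    intro i
    constructor
    · intro hx
      refine stmt18_carry hp a ha x' i (fun j hj => ?_)
      rw [← hxx' j]
      have hall : ∀ j', j < j' → x j' = 0 := fun j' hj' => hx j' (hj.trans hj')
      rw [hx j hj, if_pos hall, mul_zero, zero_add]
    · intro hx
      refine stmt18_carry hp a ha x i (fun j hj => ?_)
      rw [hxx' j]
      have hall : ∀ j', j < j' → x' j' = 0 := fun j' hj' => hx j' (hj.trans hj')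
      rw [hx j hj, if_pos hall, mul_zero, zero_add]
  funext i
  have h0 := hxx' i
  rw [if_congr (key i) rfl rfl] at h0
  exact mul_left_cancel₀ ha (add_right_cancel h0)

lemma stmt18_div (q t : ℕ) (hq : 0 < q) (ht : 0 < t) : (q * t - 1) / q = t - 1 := by
  obtain ⟨t', rfl⟩ := Nat.exists_eq_succ_of_ne_zero ht.ne'
  have h1 : q * (t' + 1) - 1 = (q - 1) + q * t' := by
    rw [Nat.mul_succ]; omega
  rw [h1, Nat.add_mul_div_left _ _ hq, Nat.div_eq_of_lt (by omega)]
  omega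

lemma stmt18_dvd (p : ℕ) (hp : 0 < p) (e : ℕ) : ∀ n : ℕ,
    ((∀ m, m < e → p ∣ n / p ^ m + 1) ↔ p ^ e ∣ n + 1) := by
  induction e with
  | zero => simp
  | succ e IH =>
    intro n
    constructor
    · intro H
      obtain ⟨t, ht⟩ := (IH n).mp (fun m hm => H m (hm.trans (Nat.lt_succ_self e)))
      have hq : 0 < p ^ e := Nat.pow_pos hp
      have ht0 : 0 < t := by
        rcases Nat.eq_zero_or_pos t with h | h
        · rw [h, Nat.mul_zero] at ht; omega
        · exact h
      have hdiv : n / p ^ e = t - 1 := by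
        have : n = p ^ e * t - 1 := by omega
        rw [this, stmt18_div _ _ hq ht0]
      have hpt : p ∣ t := by
        have := H e (Nat.lt_succ_self e)
        rwa [hdiv, Nat.sub_add_cancel ht0] at this
      rw [pow_succ, ht]
      exact Nat.mul_dvd_mul_left _ hpt
    · intro H m hm
      have hq : 0 < p ^ m := Nat.pow_pos hp
      have hm1 : p ^ (m + 1) ∣ n + 1 := dvd_trans (pow_dvd_pow p hm) H
      rw [pow_succ] at hm1
      obtain ⟨s, hs⟩ := hm1
      have hs0 : 0 < s := by
        rcases Nat.eq_zero_or_pos s with h | h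
        · rw [h, Nat.mul_zero] at hs; omega
        · exact h
      have hdiv : n / p ^ m = p * s - 1 := by
        have hn : n = p ^ m * (p * s) - 1 := by rw [← Nat.mul_assoc]; omega
        rw [hn, stmt18_div _ _ hq (Nat.mul_pos hp hs0)]
      rw [hdiv, Nat.sub_add_cancel (Nat.mul_pos hp hs0)]
      exact Dvd.intro s rfl

lemma stmt18_digit (p : ℕ) (hp : 1 < p) : ∀ (m k : ℕ) (c : ℕ → ℕ), (∀ j, c j < p) → m < k →
    ((∑ j ∈ Finset.range k, c j * p ^ j) / p ^ m) % p = c m := by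
  intro m
  induction m with
  | zero =>
    intro k c hc hk
    obtain ⟨k', rfl⟩ := Nat.exists_eq_succ_of_ne_zero (by omega : k ≠ 0)
    rw [Finset.sum_range_succ']
    simp only [pow_zero, Nat.mul_one, Nat.div_one]
    have hrw : ∀ j, c (j + 1) * p ^ (j + 1) = p * (c (j + 1) * p ^ j) := by
      intro j; rw [pow_succ]; ring
    rw [Finset.sum_congr rfl (fun j _ => hrw j), ← Finset.mul_sum, Nat.mul_add_mod]
    exact Nat.mod_eq_of_lt (hc 0)
  | succ m IH =>
    intro k c hc hk
    obtain ⟨k', rfl⟩ := Nat.exists_eq_succ_of_ne_zero (by omega : k ≠ 0)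
    rw [Finset.sum_range_succ']
    have hrw : ∀ j, c (j + 1) * p ^ (j + 1) = p * (c (j + 1) * p ^ j) := by
      intro j; rw [pow_succ]; ring
    rw [Finset.sum_congr rfl (fun j _ => hrw j), ← Finset.mul_sum]
    have hps : p ^ (m + 1) = p * p ^ m := by rw [pow_succ]; ring
    rw [hps, ← Nat.div_div_eq_div_mul]
    have : (p * (∑ j ∈ Finset.range k', c (j + 1) * p ^ j) + c 0 * p ^ 0) / p
        = ∑ j ∈ Finset.range k', c (j + 1) * p ^ j := by
      rw [pow_zero, Nat.mul_one, Nat.mul_add_div (by omega), Nat.div_eq_of_lt (hc 0)]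
      omega
    rw [this]
    exact IH k' (fun j => c (j + 1)) (fun j => hc (j + 1)) (by omega)

def stmt18_G (p k : ℕ) (n : ℕ) : Fin k → ZMod p :=
  fun i => ((n / p ^ (k - 1 - i.val) + 1 : ℕ) : ZMod p)

theorem stmt_18 {p : ℕ} (hp : p.Prime) (hodd : Odd p) (k : ℕ) (hk : 2 ≤ k)
    (h : (Fin k → ZMod p) → (Fin k → ZMod p))
    (hh : ∀ x i, h x i = x i + (if ∀ j, i < j → x j = 0 then 1 else 0)) :
    Function.Bijective h ∧
    Function.Bijective (fun x => h x + x) ∧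
    ∀ x y : Fin k → ZMod p, ∃ n : ℕ, h^[n] x = y := by
  haveI := Fact.mk hp
  have hp0 : 0 < p := hp.pos
  have hp1 : 1 < p := hp.one_lt
  -- part 1
  have hfun : h = fun x => fun i => 1 * x i + (if ∀ j, i < j → x j = 0 then 1 else 0) := by
    funext x i; rw [hh x i, one_mul]
  have hbij : Function.Bijective h := by
    rw [hfun]
    exact Finite.injective_iff_bijective.mp (stmt18_inj hp 1 one_ne_zero)
  refine ⟨hbij, ?_, ?_⟩
  -- part 2
  · have h2 : (2 : ZMod p) ≠ 0 := by
      intro hc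
      have hd : p ∣ 2 := by
        have := (ZMod.natCast_eq_zero_iff 2 p).mp (by exact_mod_cast hc)
        exact this
      have hp2 : p = 2 := (Nat.prime_dvd_prime_iff_eq hp Nat.prime_two).mp hd
      rw [hp2] at hodd
      simp [Nat.odd_iff] at hodd
    have hfun2 : (fun x => h x + x)
        = fun x : Fin k → ZMod p =>
            fun i => 2 * x i + (if ∀ j, i < j → x j = 0 then 1 else 0) := by
      funext x i
      show h x i + x i = _
      rw [hh x i]; ring
    rw [hfun2]
    exact Finite.injective_iff_bijective.mp (stmt18_inj hp 2 h2)
  -- part 3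
  · have hcond : ∀ n (i : Fin k),
        ((∀ j, i < j → stmt18_G p k n j = 0) ↔ p ^ (k - 1 - i.val) ∣ n + 1) := by
      intro n i
      rw [← stmt18_dvd p hp0 (k - 1 - i.val) n]
      constructor
      · intro H m hm
        have hik : i.val < k := i.isLt
        have hj : k - 1 - m < k := by omega
        have hlt : i < (⟨k - 1 - m, hj⟩ : Fin k) := by
          rw [Fin.lt_def]; simp; omega
        have := H ⟨k - 1 - m, hj⟩ hlt
        unfold stmt18_G at this
        simp only at this
        have hmm : k - 1 - (k - 1 - m) = m := by omega
        rw [hmm] at this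
        exact (ZMod.natCast_eq_zero_iff _ p).mp this
      · intro H j hj
        have hjk : j.val < k := j.isLt
        have hlt : i.val < j.val := (Fin.lt_def).mp hj
        have hm : k - 1 - j.val < k - 1 - i.val := by omega
        have := H (k - 1 - j.val) hm
        unfold stmt18_G
        exact (ZMod.natCast_eq_zero_iff _ p).mpr this
    have horb : ∀ n, h^[n + 1] (0 : Fin k → ZMod p) = stmt18_G p k n := by
      intro n
      induction n with
      | zero =>
        funext i
        rw [Function.iterate_one, hh]
        have : ∀ j : Fin k, i < j → (0 : Fin k → ZMod p) j = 0 := fun _ _ => rfl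
        rw [if_pos this]
        unfold stmt18_G
        simp
      | succ n IH =>
        rw [Function.iterate_succ_apply', IH]
        funext i
        rw [hh]
        by_cases hdv : p ^ (k - 1 - i.val) ∣ n + 1
        · rw [if_pos ((hcond n i).mpr hdv)]
          unfold stmt18_G
          rw [Nat.succ_div_of_dvd hdv]
          push_cast; ring
        · rw [if_neg (fun hc => hdv ((hcond n i).mp hc))]
          unfold stmt18_G
          rw [Nat.succ_div_of_not_dvd hdv, add_zero]
    have hsurj : ∀ x : Fin k → ZMod p, ∃ n, h^[n] (0 : Fin k → ZMod p) = x := by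
      intro x
      classical
      set c : ℕ → ℕ := fun m =>
        if hm : m < k then (x ⟨k - 1 - m, by omega⟩ - 1).val else 0 with hc_def
      have hc : ∀ j, c j < p := by
        intro j
        by_cases hj : j < k
        · simp only [hc_def, dif_pos hj]
          exact ZMod.val_lt _
        · simp only [hc_def, dif_neg hj]; omega
      refine ⟨(∑ m ∈ Finset.range k, c m * p ^ m) + 1, ?_⟩
      rw [horb]
      funext i
      unfold stmt18_G
      have hik : i.val < k := i.isLt
      have hm : k - 1 - i.val < k := by omega
      have hd := stmt18_digit p hp1 (k - 1 - i.val) k c hc hm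
      have step1 : (((∑ m ∈ Finset.range k, c m * p ^ m) / p ^ (k - 1 - i.val) : ℕ) : ZMod p)
          = ((c (k - 1 - i.val) : ℕ) : ZMod p) := by
        rw [← hd, ZMod.natCast_mod]
      push_cast
      rw [step1]
      simp only [hc_def, dif_pos hm]
      have hidx : (⟨k - 1 - (k - 1 - i.val), by omega⟩ : Fin k) = i := by
        apply Fin.ext; simp; omega
      rw [hidx, ZMod.natCast_zmod_val]
      ring
    have hper : ∃ d, 0 < d ∧ h^[d] (0 : Fin k → ZMod p) = 0 := by
      obtain ⟨a, b, hne, heq⟩ :=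
        Finite.exists_ne_map_eq_of_infinite (fun n : ℕ => h^[n] (0 : Fin k → ZMod p))
      rcases hne.lt_or_gt with hab | hab
      · refine ⟨b - a, by omega, ?_⟩
        have : h^[a] (h^[b - a] (0 : Fin k → ZMod p)) = h^[a] 0 := by
          rw [← Function.iterate_add_apply, (by omega : a + (b - a) = b), heq]
        exact (hbij.injective.iterate a) this
      · refine ⟨a - b, by omega, ?_⟩
        have : h^[b] (h^[a - b] (0 : Fin k → ZMod p)) = h^[b] 0 := by
          rw [← Function.iterate_add_apply, (by omega : b + (a - b) = a), ← heq]
        exact (hbij.injective.iterate b) this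
    intro x y
    obtain ⟨a, ha⟩ := hsurj x
    obtain ⟨b, hb⟩ := hsurj y
    obtain ⟨d, hd0, hdfix⟩ := hper
    obtain ⟨e, rfl⟩ : ∃ e, d = e + 1 := ⟨d - 1, by omega⟩
    refine ⟨b + a * e, ?_⟩
    rw [← ha, ← Function.iterate_add_apply]
    have hfix : h^[a * (e + 1)] (0 : Fin k → ZMod p) = 0 := by
      rw [mul_comm, Function.iterate_mul]
      exact Function.iterate_fixed hdfix a
    have harith : b + a * e + a = b + a * (e + 1) := by ring
    rw [harith, Function.iterate_add_apply, hfix, hb]
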